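/- Fix Γ with 1 < Γ ≤ 5/3 and a_∞² with 0 < a_∞² < Γ − 1. Then the cubic equation 3y³ + (7 − 6Γ)y² + (Γ−1)(3Γ−5)y + a_∞²(2(Γ−1) − a_∞²) = 0 in y = a_∗² has three distinct real roots. -/
import Mathlib


/-- for `1 < Γ ≤ 5/3` and `0 < a_∞² < Γ − 1`, the cubic
`3y³ + (7−6Γ)y² + (Γ−1)(3Γ−5)y + a_∞²(2(Γ−1) − a_∞²) = 0` has three distinct
real roots. -/
theorem sonic_cubic_three_roots
    (Γ ainf2 : ℝ) (hΓ : 1 < Γ) (hΓ' : Γ ≤ 5 / 3)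
    (ha : 0 < ainf2) (ha' : ainf2 < Γ - 1) :
    ∃ y₁ y₂ y₃ : ℝ, y₁ ≠ y₂ ∧ y₁ ≠ y₃ ∧ y₂ ≠ y₃ ∧
      (∀ y ∈ ({y₁, y₂, y₃} : Set ℝ),
        3 * y ^ 3 + (7 - 6 * Γ) * y ^ 2 + (Γ - 1) * (3 * Γ - 5) * y +
          ainf2 * (2 * (Γ - 1) - ainf2) = 0) := by
  set c : ℝ := Γ - 1 with hc
  have hc0 : 0 < c := by simp [hc]; linarith
  have hcb : 0 < c - ainf2 := by linarith
  have hc23 : c ≤ 2/3 := by simp [hc]; linarith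
  set f : ℝ → ℝ := fun y => (c - y) ^ 2 * (1 + 3 * y) - (c - ainf2) ^ 2 with hf
  have hcont : Continuous f := by fun_prop
  have hA : f (-(1/3)) < 0 := by
    simp only [hf]; nlinarith
  have hB : 0 < f 0 := by
    simp only [hf]; nlinarith
  have hC : f c < 0 := by
    simp only [hf]; nlinarith
  have hD : 0 < f (c + 1) := by
    simp only [hf]; nlinarith
  obtain ⟨y₁, hy₁mem, hy₁⟩ := intermediate_value_Ioo (by linarith : (-(1/3):ℝ) ≤ 0)
    hcont.continuousOn ⟨hA, hB⟩
  obtain ⟨y₂, hy₂mem, hy₂⟩ := intermediate_value_Ioo' (by linarith : (0:ℝ) ≤ c)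
    hcont.continuousOn ⟨hC, hB⟩
  obtain ⟨y₃, hy₃mem, hy₃⟩ := intermediate_value_Ioo (by linarith : c ≤ c + 1)
    hcont.continuousOn ⟨hC, hD⟩
  have h12 : y₁ < y₂ := lt_trans hy₁mem.2 hy₂mem.1
  have h23 : y₂ < y₃ := lt_trans hy₂mem.2 hy₃mem.1
  refine ⟨y₁, y₂, y₃, ne_of_lt h12, ne_of_lt (lt_trans h12 h23), ne_of_lt h23, ?_⟩
  have key : ∀ y : ℝ, f y = 0 →
      3 * y ^ 3 + (7 - 6 * Γ) * y ^ 2 + (Γ - 1) * (3 * Γ - 5) * y +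
        ainf2 * (2 * (Γ - 1) - ainf2) = 0 := by
    intro y hy
    have : (c - y) ^ 2 * (1 + 3 * y) - (c - ainf2) ^ 2 = 0 := hy
    rw [hc] at this
    nlinarith [this]
  rintro y (rfl | rfl | rfl)
  · exact key _ hy₁
  · exact key _ hy₂
  · exact key _ hy₃
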